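/- arXiv:1803.08363 — 3 statements merged into one kernel-verified Lean document; each statement's English description precedes it below -/
import Mathlib

section
/- For n ≥ 1, t > 0 fixed, and f_n(P) = P^{n-1} e^{-t/P} defined for P > 0, the (n-1)st derivative of f_n satisfies f_n^{(n-1)}(P) = (n-1)! · e^{-t/P} · ∑_{i=0}^{n-1} (t/P)^i / i! for all P > 0. -/
noncomputable def cc (a : ℝ) (k i : ℕ) : ℝ :=
  (k.choose i : ℝ) * ∏ j ∈ Finset.Ico i k, (a - j)

lemma cc_self (a : ℝ) (k : ℕ) : cc a k k = 1 := by
  simp [cc]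

lemma cc_of_lt (a : ℝ) {k i : ℕ} (h : k < i) : cc a k i = 0 := by
  simp [cc, Nat.choose_eq_zero_of_lt h]

lemma cc_zero_succ (a : ℝ) (k : ℕ) : cc a (k+1) 0 = (a - k) * cc a k 0 := by
  simp only [cc, Nat.choose_zero_right, Nat.cast_one, one_mul]
  rw [Finset.prod_Ico_succ_top (Nat.zero_le k)]
  ring

lemma cc_rec (a : ℝ) (k i : ℕ) :
    cc a (k+1) (i+1) = (a - k - (i+1)) * cc a k (i+1) + cc a k i := by
  rcases lt_trichotomy i k with h | rfl | h
  · have h1 : i + 1 ≤ k := h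
    have hch : ((i:ℝ)+1) * (k.choose (i+1)) = ((k:ℝ) - i) * (k.choose i) := by
      have := Nat.choose_succ_right_eq k i
      have hki : ((k - i : ℕ) : ℝ) = (k : ℝ) - i := by
        push_cast [Nat.cast_sub h.le]; ring
      calc ((i:ℝ)+1) * (k.choose (i+1)) = ((k.choose (i+1) * (i+1) : ℕ) : ℝ) := by push_cast; ring
        _ = ((k.choose i * (k - i) : ℕ) : ℝ) := by rw [this]
        _ = ((k:ℝ) - i) * (k.choose i) := by push_cast [hki]; ring
    simp only [cc]
    rw [Finset.prod_Ico_succ_top h1, Finset.prod_eq_prod_Ico_succ_bot h,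
      Nat.choose_succ_succ' k i]
    push_cast
    linear_combination (∏ j ∈ Finset.Ico (i+1) k, (a - j)) * hch
  · rw [cc_self, cc_self, cc_of_lt a (Nat.lt_succ_self i)]
    ring
  · rw [cc_of_lt a h, cc_of_lt a (h.trans (Nat.lt_succ_self i)),
      cc_of_lt a (Nat.succ_lt_succ h)]
    ring

lemma hasDerivAt_aux (t : ℝ) (e : ℤ) (P : ℝ) (hP : 0 < P) :
    HasDerivAt (fun P : ℝ => P ^ e * Real.exp (-t / P))
      (Real.exp (-t / P) * ((e : ℝ) * P ^ (e - 1) + t * P ^ (e - 2))) P := by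
  have hexp : HasDerivAt (fun P : ℝ => Real.exp (-t / P))
      (Real.exp (-t / P) * (t / P ^ 2)) P := by
    have h1 : HasDerivAt (fun P : ℝ => -t / P) (t / P ^ 2) P := by
      have h := (hasDerivAt_inv hP.ne').const_mul (-t)
      have : -t * -(P ^ 2)⁻¹ = t / P ^ 2 := by field_simp
      rw [this] at h
      simpa [div_eq_mul_inv] using h
    exact (Real.hasDerivAt_exp _).comp P h1
  have hz := hasDerivAt_zpow e P (Or.inl hP.ne')
  have := hz.mul hexp
  convert this using 1
  · rfl
  · rfl
  · rfl
  have h2 : P ^ (e - 1) = P ^ e / P := by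
    rw [zpow_sub₀ hP.ne', zpow_one]
  have h3 : P ^ (e - 2) = P ^ e / P ^ 2 := by
    rw [zpow_sub₀ hP.ne', zpow_two, sq]
  rw [h2, h3]
  field_simp

lemma prod_desc (m : ℕ) : ∀ k, k ≤ m →
    ∏ j ∈ Finset.Ico (m - k) m, ((m : ℝ) - j) = (Nat.factorial k : ℝ) := by
  intro k
  induction k with
  | zero => simp
  | succ k ih =>
    intro hk
    have hlt : m - (k+1) < m := by omega
    rw [Finset.prod_eq_prod_Ico_succ_bot hlt]
    have h1 : m - (k + 1) + 1 = m - k := by omega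
    have h2 : ((m:ℝ) - (m - (k+1) : ℕ)) = (k : ℝ) + 1 := by
      have : ((m - (k+1) : ℕ) : ℝ) = (m : ℝ) - ((k:ℝ)+1) := by
        push_cast [Nat.cast_sub hk]; ring
      rw [this]; ring
    rw [h1, ih (by omega), h2]
    push_cast [Nat.factorial_succ]
    ring

lemma sum_step (a : ℤ) (t P E : ℝ) (k : ℕ) :
    ∑ i ∈ Finset.range (k+1), cc (a:ℝ) k i * t ^ i *
        (E * (((a - k - i : ℤ) : ℝ) * P ^ (a - k - i - 1) + t * P ^ (a - k - i - 2)))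
      = E * ∑ i ∈ Finset.range (k+1+1), cc (a:ℝ) (k+1) i * t ^ i * P ^ (a - (k+1 : ℕ) - i) := by
  rw [Finset.mul_sum, Finset.sum_range_succ' _ (k+1)]
  simp only [cc_rec, cc_zero_succ]
  have hsplit : ∀ i ∈ Finset.range (k+1),
      cc (a:ℝ) k i * t ^ i *
        (E * (((a - k - i : ℤ) : ℝ) * P ^ (a - k - i - 1) + t * P ^ (a - k - i - 2)))
      = cc (a:ℝ) k i * ((a:ℝ) - k - i) * t ^ i * E * P ^ (a - k - i - 1)
        + cc (a:ℝ) k i * t ^ (i+1) * E * P ^ (a - k - i - 2) := by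
    intro i _
    push_cast
    ring
  rw [Finset.sum_congr rfl hsplit, Finset.sum_add_distrib]
  have hsplit2 : ∀ i ∈ Finset.range (k+1),
      E * ((((a:ℝ) - k - (i+1)) * cc (a:ℝ) k (i+1) + cc (a:ℝ) k i) * t ^ (i+1)
          * P ^ (a - ((k:ℕ)+1:ℕ) - ((i:ℕ)+1:ℕ)))
      = ((a:ℝ) - k - (i+1)) * cc (a:ℝ) k (i+1) * t ^ (i+1) * E * P ^ (a - k - i - 2)
        + cc (a:ℝ) k i * t ^ (i+1) * E * P ^ (a - k - i - 2) := by
    intro i _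
    push_cast
    ring
  rw [Finset.sum_congr rfl hsplit2, Finset.sum_add_distrib]
  have h1 : ∑ i ∈ Finset.range (k+1), cc (a:ℝ) k i * ((a:ℝ) - k - i) * t ^ i * E * P ^ (a - k - i - 1)
      = ∑ i ∈ Finset.range (k+1), ((a:ℝ) - k - (i+1)) * cc (a:ℝ) k (i+1) * t ^ (i+1) * E * P ^ (a - k - i - 2)
        + E * (((a:ℝ) - k) * cc (a:ℝ) k 0 * t ^ 0 * P ^ (a - ((k:ℕ)+1:ℕ) - ((0:ℕ):ℕ))) := by
    rw [Finset.sum_range_succ' _ k, Finset.sum_range_succ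
      (fun i => ((a:ℝ) - k - (i+1)) * cc (a:ℝ) k (i+1) * t ^ (i+1) * E * P ^ (a - k - i - 2)) k]
    rw [cc_of_lt (a:ℝ) (Nat.lt_succ_self k)]
    have : ∀ i ∈ Finset.range k,
        cc (a:ℝ) k (i+1) * ((a:ℝ) - (k:ℝ) - ((i+1:ℕ):ℝ)) * t ^ (i+1) * E * P ^ (a - k - ((i+1:ℕ):ℤ) - 1)
        = ((a:ℝ) - k - (i+1)) * cc (a:ℝ) k (i+1) * t ^ (i+1) * E * P ^ (a - k - i - 2) := by
      intro i _
      push_cast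
      ring
    rw [Finset.sum_congr rfl this]
    simp only [zero_mul, add_zero, pow_zero, mul_one]
    rw [add_assoc]
    congr 1
    push_cast
    ring
  rw [h1]
  ring

lemma key (t : ℝ) (a : ℤ) (k : ℕ) : ∀ P : ℝ, 0 < P →
    iteratedDeriv k (fun P : ℝ => P ^ a * Real.exp (-t / P)) P
      = Real.exp (-t / P) * ∑ i ∈ Finset.range (k+1),
          cc (a:ℝ) k i * t ^ i * P ^ (a - k - i) := by
  induction k with
  | zero =>
    intro P hP
    simp [cc]
    ring
  | succ k ih =>
    intro P hP
    rw [iteratedDeriv_succ]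
    have hF : HasDerivAt
        (fun P : ℝ => ∑ i ∈ Finset.range (k+1),
          cc (a:ℝ) k i * t ^ i * (P ^ (a - k - i) * Real.exp (-t / P)))
        (∑ i ∈ Finset.range (k+1), cc (a:ℝ) k i * t ^ i *
          (Real.exp (-t / P) * (((a - k - i : ℤ) : ℝ) * P ^ (a - k - i - 1)
            + t * P ^ (a - k - i - 2)))) P := by
      apply HasDerivAt.fun_sum
      intro i _
      exact (hasDerivAt_aux t (a - k - i) P hP).const_mul _
    have heq : (iteratedDeriv k (fun P : ℝ => P ^ a * Real.exp (-t / P)))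
        =ᶠ[nhds P] (fun P : ℝ => ∑ i ∈ Finset.range (k+1),
          cc (a:ℝ) k i * t ^ i * (P ^ (a - k - i) * Real.exp (-t / P))) := by
      filter_upwards [isOpen_Ioi.mem_nhds (Set.mem_Ioi.mpr hP)] with x hx
      rw [ih x hx, Finset.mul_sum]
      exact Finset.sum_congr rfl fun i _ => by ring
    rw [heq.deriv_eq, hF.deriv]
    exact sum_step a t P (Real.exp (-t / P)) k

lemma cc_nat (m i : ℕ) (h : i ≤ m) :
    cc (m:ℝ) m i = (m.factorial : ℝ) / (i.factorial : ℝ) := by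
  have h1 : m - (m - i) = i := by omega
  have h2 := prod_desc m (m - i) (Nat.sub_le m i)
  rw [h1] at h2
  rw [cc, h2]
  have h3 := Nat.choose_mul_factorial_mul_factorial h
  have h4 : ((m.choose i * i.factorial * (m - i).factorial : ℕ) : ℝ) = (m.factorial : ℝ) := by
    rw [h3]
  push_cast at h4
  have hi : (i.factorial : ℝ) ≠ 0 := Nat.cast_ne_zero.mpr i.factorial_ne_zero
  field_simp
  linarith [h4]

theorem iteratedDeriv_aux_fn (n : ℕ) (hn : 1 ≤ n) (t : ℝ) (ht : 0 < t) (P : ℝ) (hP : 0 < P) :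
    iteratedDeriv (n - 1) (fun P : ℝ => P ^ (n - 1) * Real.exp (-t / P)) P
      = (Nat.factorial (n - 1)) * Real.exp (-t / P) *
          ∑ i ∈ Finset.range n, (t / P) ^ i / (Nat.factorial i) := by
  obtain ⟨m, rfl⟩ : ∃ m, n = m + 1 := ⟨n - 1, by omega⟩
  simp only [Nat.add_sub_cancel]
  have hfun : (fun P : ℝ => P ^ m * Real.exp (-t / P))
      = (fun P : ℝ => P ^ (m:ℤ) * Real.exp (-t / P)) := by
    funext x
    rw [zpow_natCast]
  rw [hfun, key t m m P hP, mul_comm ((m.factorial : ℝ)) (Real.exp (-t/P)), mul_assoc,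
    Finset.mul_sum]
  rw [Finset.mul_sum, Finset.mul_sum]
  apply Finset.sum_congr rfl
  intro i hi
  rw [show ((m:ℤ):ℝ) = (m:ℝ) from by push_cast; ring]
  have him : i ≤ m := by
    simpa [Nat.lt_succ_iff] using Finset.mem_range.mp hi
  rw [cc_nat m i him]
  have he : (m:ℤ) - m - i = -(i:ℤ) := by ring
  rw [he, zpow_neg, zpow_natCast, div_pow]
  have hi0 : (i.factorial : ℝ) ≠ 0 := Nat.cast_ne_zero.mpr i.factorial_ne_zero
  field_simp
end

section
/- Let a > 0 and t ≥ 0 be fixed, n ≥ 1, and define for pairwise distinct small nonzero reals ε_2, ..., ε_n the expression S(ε) = f(a)/∏_{j>1}((-1)^{n-1} ε_j) + ∑_{i=2}^n f(a+ε_i)/(ε_i ∏_{j>1, j≠i}(ε_i - ε_j)), where f(P) = P^{n-1} e^{-t/P}. Then S(ε) tends to f^{(n-1)}(a)/(n-1)! = e^{-t/a} ∑_{i=0}^{n-1} (t/a)^i / i! as all ε_i → 0. -/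
open Finset Filter Topology

/-- coefficient in the explicit formula for iterated derivatives of `x^m * exp (-t/x)` -/
noncomputable def hypoC (m k i : ℕ) : ℝ :=
  (k.choose i : ℝ) * (Nat.factorial (m - i)) / (Nat.factorial (m - k))

lemma hypoC_id0 {m k : ℕ} (hk : k < m) :
    ((m : ℝ) - k) * hypoC m k 0 = hypoC m (k + 1) 0 := by
  obtain ⟨q, rfl⟩ : ∃ q, m = k + 1 + q := ⟨m - (k+1), by omega⟩
  simp only [hypoC, Nat.choose_zero_right, Nat.sub_zero, Nat.cast_one]
  have h1 : k + 1 + q - k = q + 1 := by omega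
  have h2 : k + 1 + q - (k + 1) = q := by omega
  rw [h1, h2, Nat.factorial_succ]
  have : (Nat.factorial q : ℝ) ≠ 0 := Nat.cast_ne_zero.mpr (Nat.factorial_ne_zero q)
  field_simp
  push_cast
  ring

lemma hypoC_id1 {m k j : ℕ} (hk : k < m) (hj : j ≤ k) :
    hypoC m k j + ((m : ℝ) - k - (j + 1)) * hypoC m k (j + 1) = hypoC m (k + 1) (j + 1) := by
  obtain ⟨p, rfl⟩ : ∃ p, k = j + p := ⟨k - j, by omega⟩
  obtain ⟨q, rfl⟩ : ∃ q, m = j + p + 1 + q := ⟨m - (j + p + 1), by omega⟩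
  simp only [hypoC]
  have h1 : j + p + 1 + q - j = p + q + 1 := by omega
  have h2 : j + p + 1 + q - (j + 1) = p + q := by omega
  have h3 : j + p + 1 + q - (j + p) = q + 1 := by omega
  have h4 : j + p + 1 + q - (j + p + 1) = q := by omega
  rw [h1, h2, h3, h4, Nat.factorial_succ (p + q), Nat.factorial_succ q,
    Nat.choose_succ_succ (j + p) j]
  have hq : (Nat.factorial q : ℝ) ≠ 0 := Nat.cast_ne_zero.mpr (Nat.factorial_ne_zero q)
  have hpq : (Nat.factorial (p + q) : ℝ) ≠ 0 := Nat.cast_ne_zero.mpr (Nat.factorial_ne_zero _)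
  have key : ((j + p).choose (j + 1) : ℝ) * (j + 1) = ((j + p).choose j : ℝ) * p := by
    have := Nat.choose_succ_right_eq (j + p) j
    have h5 : j + p - j = p := by omega
    rw [h5] at this
    exact_mod_cast congrArg (Nat.cast : ℕ → ℝ) this
  field_simp
  push_cast [Nat.succ_eq_add_one]
  linear_combination (-(Nat.factorial (p + q) : ℝ) * (Nat.factorial q : ℝ)) * key

/-- explicit formula for the `k`-th derivative of `x ^ m * exp (-t/x)` on `(0, ∞)` -/
noncomputable def hypoF (m : ℕ) (t : ℝ) (k : ℕ) (x : ℝ) : ℝ :=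
  Real.exp (-t / x) * ∑ i ∈ Finset.range (k + 1), hypoC m k i * t ^ i * x ^ ((m : ℤ) - k - i)

lemma hasDerivAt_exp_neg_div (t : ℝ) {x : ℝ} (hx : x ≠ 0) :
    HasDerivAt (fun y : ℝ => Real.exp (-t / y)) (Real.exp (-t / x) * (t / x ^ 2)) x := by
  have h1 : HasDerivAt (fun y : ℝ => -t / y) (t / x ^ 2) x := by
    have := (hasDerivAt_inv hx).const_mul (-t)
    simp only [div_eq_mul_inv]
    exact this.congr_deriv (by ring)
  exact h1.exp


lemma hypo_sum_step {m k : ℕ} (hk : k < m) {t x : ℝ} (hx : x ≠ 0) :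
    (t / x ^ 2) * (∑ i ∈ Finset.range (k + 1), hypoC m k i * t ^ i * x ^ ((m : ℤ) - k - i))
      + ∑ i ∈ Finset.range (k + 1),
          hypoC m k i * t ^ i * (((m : ℤ) - k - i : ℤ) : ℝ) * x ^ ((m : ℤ) - k - i - 1)
    = ∑ i ∈ Finset.range (k + 1 + 1), hypoC m (k + 1) i * t ^ i
        * x ^ ((m : ℤ) - ((k + 1 : ℕ) : ℤ) - i) := by
  have hxp : ∀ j : ℤ, x ^ (j - 2) = x ^ j / x ^ 2 := by
    intro j
    rw [show (j - 2) = j - ((2:ℕ):ℤ) by push_cast; ring, zpow_sub₀ hx, zpow_natCast]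
  -- first sum rewritten
  have h1 : (t / x ^ 2) * (∑ i ∈ Finset.range (k + 1), hypoC m k i * t ^ i * x ^ ((m : ℤ) - k - i))
      = ∑ i ∈ Finset.range (k + 1), hypoC m k i * t ^ (i + 1) * x ^ ((m : ℤ) - k - i - 2) := by
    rw [Finset.mul_sum]
    refine Finset.sum_congr rfl fun i _ => ?_
    rw [hxp ((m : ℤ) - k - i)]
    have hx2 : (x:ℝ) ^ 2 ≠ 0 := pow_ne_zero 2 hx
    field_simp
    ring
  -- second sum extended to range (k+2)
  have h2 : ∑ i ∈ Finset.range (k + 1),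
        hypoC m k i * t ^ i * (((m : ℤ) - k - i : ℤ) : ℝ) * x ^ ((m : ℤ) - k - i - 1)
      = ∑ i ∈ Finset.range (k + 2),
        hypoC m k i * t ^ i * (((m : ℤ) - k - i : ℤ) : ℝ) * x ^ ((m : ℤ) - k - i - 1) := by
    have hz : hypoC m k (k + 1) = 0 := by simp [hypoC, Nat.choose_succ_self]
    rw [Finset.sum_range_succ (fun i => hypoC m k i * t ^ i * (((m : ℤ) - k - i : ℤ) : ℝ)
      * x ^ ((m : ℤ) - k - i - 1)) (k + 1), hz]
    simp
  rw [h1, h2, Finset.sum_range_succ' (fun i => hypoC m k i * t ^ i * (((m : ℤ) - k - i : ℤ) : ℝ)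
      * x ^ ((m : ℤ) - k - i - 1)) (k + 1),
    Finset.sum_range_succ' (fun i => hypoC m (k + 1) i * t ^ i
      * x ^ ((m : ℤ) - ((k + 1 : ℕ) : ℤ) - i)) (k + 1)]
  rw [← add_assoc, ← Finset.sum_add_distrib]
  congr 1
  · refine Finset.sum_congr rfl fun i hi => ?_
    have hi' : i ≤ k := by simpa [Nat.lt_succ_iff] using hi
    have he1 : (m : ℤ) - k - (i + 1 : ℕ) - 1 = (m : ℤ) - k - i - 2 := by push_cast; ring
    have he2 : (m : ℤ) - ((k + 1 : ℕ) : ℤ) - ((i + 1 : ℕ) : ℤ) = (m : ℤ) - k - i - 2 := by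
      push_cast; ring
    have he3 : ((((m : ℤ) - k - (i + 1 : ℕ)) : ℤ) : ℝ) = (m : ℝ) - k - (i + 1) := by push_cast; ring
    rw [he1, he2, he3]
    have := hypoC_id1 hk hi'
    calc hypoC m k i * t ^ (i + 1) * x ^ ((m : ℤ) - k - i - 2)
        + hypoC m k (i + 1) * t ^ (i + 1) * ((m : ℝ) - k - (i + 1)) * x ^ ((m : ℤ) - k - i - 2)
        = (hypoC m k i + ((m : ℝ) - k - (i + 1)) * hypoC m k (i + 1)) * t ^ (i + 1)
            * x ^ ((m : ℤ) - k - i - 2) := by ring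
      _ = hypoC m (k + 1) (i + 1) * t ^ (i + 1) * x ^ ((m : ℤ) - k - i - 2) := by rw [this]
  · have he1 : (m : ℤ) - k - ((0 : ℕ) : ℤ) - 1 = (m : ℤ) - ((k + 1 : ℕ) : ℤ) - ((0 : ℕ) : ℤ) := by
      push_cast; ring
    have he3 : ((((m : ℤ) - k - (0 : ℕ)) : ℤ) : ℝ) = (m : ℝ) - k := by push_cast; ring
    rw [he1, he3]
    have := hypoC_id0 hk
    calc hypoC m k 0 * t ^ 0 * ((m : ℝ) - k) * x ^ ((m : ℤ) - ((k + 1 : ℕ) : ℤ) - ((0 : ℕ) : ℤ))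
        = (((m : ℝ) - k) * hypoC m k 0) * t ^ 0 * x ^ ((m : ℤ) - ((k + 1 : ℕ) : ℤ) - ((0 : ℕ) : ℤ)) := by ring
      _ = hypoC m (k + 1) 0 * t ^ 0 * x ^ ((m : ℤ) - ((k + 1 : ℕ) : ℤ) - ((0 : ℕ) : ℤ)) := by rw [this]

lemma hasDerivAt_hypoF {m k : ℕ} {t x : ℝ} (hk : k < m) (hx : x ≠ 0) :
    HasDerivAt (hypoF m t k) (hypoF m t (k + 1) x) x := by
  have hsum : HasDerivAt (fun y : ℝ => ∑ i ∈ Finset.range (k + 1),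
      hypoC m k i * t ^ i * y ^ ((m : ℤ) - k - i))
      (∑ i ∈ Finset.range (k + 1),
        hypoC m k i * t ^ i * (((m : ℤ) - k - i : ℤ) : ℝ) * x ^ ((m : ℤ) - k - i - 1)) x := by
    refine HasDerivAt.fun_sum fun i _ => ?_
    have := (hasDerivAt_zpow ((m : ℤ) - k - i) x (Or.inl hx)).const_mul (hypoC m k i * t ^ i)
    exact this.congr_deriv (by ring)
  have hmain := (hasDerivAt_exp_neg_div t hx).mul hsum
  have : HasDerivAt (hypoF m t k)
      (Real.exp (-t / x) * (t / x ^ 2)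
          * (∑ i ∈ Finset.range (k + 1), hypoC m k i * t ^ i * x ^ ((m : ℤ) - k - i))
        + Real.exp (-t / x) * ∑ i ∈ Finset.range (k + 1),
            hypoC m k i * t ^ i * (((m : ℤ) - k - i : ℤ) : ℝ) * x ^ ((m : ℤ) - k - i - 1)) x :=
    hmain
  convert this using 1
  unfold hypoF
  rw [mul_assoc, ← mul_add, ← hypo_sum_step hk hx]

lemma iter_deriv_eq_hypoF (m : ℕ) (t : ℝ) :
    ∀ k, k ≤ m → ∀ x ∈ Set.Ioi (0:ℝ),
      deriv^[k] (fun y => y ^ m * Real.exp (-t / y)) x = hypoF m t k x := by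
  intro k
  induction k with
  | zero =>
    intro _ x hx
    simp only [Function.iterate_zero_apply, hypoF, zero_add, Finset.sum_range_one]
    have : hypoC m 0 0 = 1 := by
      simp [hypoC, div_self (Nat.cast_ne_zero.mpr (Nat.factorial_ne_zero m) : (Nat.factorial m : ℝ) ≠ 0)]
    rw [this]
    have : (x : ℝ) ^ ((m : ℤ) - (0:ℕ) - (0:ℕ)) = x ^ m := by
      rw [show (m : ℤ) - (0:ℕ) - (0:ℕ) = (m : ℤ) by push_cast; ring, zpow_natCast]
    rw [this]
    ring
  | succ k ih =>
    intro hk x hx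
    have hx0 : (0:ℝ) < x := hx
    rw [Function.iterate_succ_apply']
    have hev : deriv^[k] (fun y => y ^ m * Real.exp (-t / y)) =ᶠ[𝓝 x] hypoF m t k :=
      Filter.eventuallyEq_of_mem (Ioi_mem_nhds hx0) (ih (le_of_lt hk))
    rw [hev.deriv_eq]
    exact (hasDerivAt_hypoF hk hx0.ne').deriv

lemma differentiableAt_iter_deriv (m : ℕ) (t : ℝ) {k : ℕ} (hk : k < m) {x : ℝ} (hx : 0 < x) :
    DifferentiableAt ℝ (deriv^[k] (fun y => y ^ m * Real.exp (-t / y))) x := by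
  have hev : deriv^[k] (fun y => y ^ m * Real.exp (-t / y)) =ᶠ[𝓝 x] hypoF m t k :=
    Filter.eventuallyEq_of_mem (Ioi_mem_nhds hx) (iter_deriv_eq_hypoF m t k (le_of_lt hk))
  exact hev.differentiableAt_iff.mpr (hasDerivAt_hypoF hk hx.ne').differentiableAt

lemma continuousOn_hypoF (m : ℕ) (t : ℝ) (k : ℕ) :
    ContinuousOn (hypoF m t k) (Set.Ioi 0) := by
  intro x hx
  have hx0 : (0:ℝ) < x := hx
  refine ContinuousAt.continuousWithinAt ?_
  refine ContinuousAt.mul ?_ ?_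
  · exact Real.continuous_exp.continuousAt.comp
      ((continuousAt_const.div continuousAt_id hx0.ne'))
  · refine tendsto_finset_sum _ fun i _ => ?_
    exact continuousAt_const.mul (continuousAt_zpow₀ _ _ (Or.inl hx0.ne'))

lemma continuousOn_iter_deriv (m : ℕ) (t : ℝ) {k : ℕ} (hk : k ≤ m) :
    ContinuousOn (deriv^[k] (fun y => y ^ m * Real.exp (-t / y))) (Set.Ioi 0) :=
  (continuousOn_hypoF m t k).congr (iter_deriv_eq_hypoF m t k hk)

lemma iterated_rolle : ∀ (k : ℕ) (g : ℝ → ℝ) (s : Finset ℝ) (hs : s.Nonempty),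
    s.card = k + 1 → (↑s ⊆ Set.Ioi (0:ℝ)) →
    (∀ j, j ≤ k → ContinuousOn (deriv^[j] g) (Set.Ioi 0)) →
    (∀ x ∈ s, g x = 0) →
    ∃ c ∈ Set.Icc (s.min' hs) (s.max' hs), deriv^[k] g c = 0 := by
  intro k
  induction k with
  | zero =>
    intro g s hs hcard _ _ hzero
    obtain ⟨x, rfl⟩ := Finset.card_eq_one.mp hcard
    exact ⟨x, by simp, by simpa using hzero x (Finset.mem_singleton_self x)⟩
  | succ k ih =>
    intro g s hs hcard hsub hcont hzero
    have hcard' : s.card = k + 2 := hcard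
    set e := s.orderIsoOfFin hcard' with he
    set x : Fin (k + 2) → ℝ := fun i => (e i : ℝ) with hxdef
    have hxmono : StrictMono x := fun i j hij => by
      exact_mod_cast e.strictMono hij
    have hxmem : ∀ i, x i ∈ s := fun i => (e i).2
    have hxpos : ∀ i, (0:ℝ) < x i := fun i => hsub (hxmem i)
    have hrolle : ∀ i : Fin (k + 1), ∃ c ∈ Set.Ioo (x i.castSucc) (x i.succ), deriv g c = 0 := by
      intro i
      have hlt : x i.castSucc < x i.succ := hxmono Fin.castSucc_lt_succ
      have hIcc : Set.Icc (x i.castSucc) (x i.succ) ⊆ Set.Ioi 0 :=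
        fun y hy => lt_of_lt_of_le (hxpos i.castSucc) hy.1
      have hcg : ContinuousOn g (Set.Icc (x i.castSucc) (x i.succ)) := by
        have := (hcont 0 (Nat.zero_le _)).mono hIcc
        simpa using this
      exact exists_deriv_eq_zero hlt hcg
        (by rw [hzero _ (hxmem i.castSucc), hzero _ (hxmem i.succ)])
    choose c hc1 hc2 using hrolle
    have hcmono : StrictMono c := by
      intro i j hij
      have h1 : c i < x i.succ := (hc1 i).2
      have h2 : x j.castSucc < c j := (hc1 j).1
      have h3 : i.succ ≤ j.castSucc := by
        rw [Fin.le_def]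
        simp only [Fin.val_succ, Fin.coe_castSucc]
        exact hij
      exact lt_of_lt_of_le h1 (le_trans (hxmono.monotone h3) (le_of_lt h2))
    set tt : Finset ℝ := Finset.image c Finset.univ with htt
    have htne : tt.Nonempty := Finset.Nonempty.image ⟨0, Finset.mem_univ 0⟩ c
    have htcard : tt.card = k + 1 := by
      rw [htt, Finset.card_image_of_injective _ hcmono.injective, Finset.card_univ,
        Fintype.card_fin]
    have htsub : ↑tt ⊆ Set.Ioi (0:ℝ) := by
      intro y hy
      obtain ⟨i, _, rfl⟩ := Finset.mem_image.mp hy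
      exact lt_trans (hxpos i.castSucc) (hc1 i).1
    have htcont : ∀ j, j ≤ k → ContinuousOn (deriv^[j] (deriv g)) (Set.Ioi 0) := by
      intro j hj
      rw [← Function.iterate_succ_apply]
      exact hcont (j + 1) (Nat.succ_le_succ hj)
    have htzero : ∀ y ∈ tt, deriv g y = 0 := by
      intro y hy
      obtain ⟨i, _, rfl⟩ := Finset.mem_image.mp hy
      exact hc2 i
    obtain ⟨ξ, hξmem, hξzero⟩ := ih (deriv g) tt htne htcard htsub htcont htzero
    refine ⟨ξ, ⟨?_, ?_⟩, by rwa [Function.iterate_succ_apply]⟩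
    · obtain ⟨i, _, hi⟩ := Finset.mem_image.mp (tt.min'_mem htne)
      calc s.min' hs ≤ x i.castSucc := s.min'_le _ (hxmem i.castSucc)
        _ ≤ c i := le_of_lt (hc1 i).1
        _ = tt.min' htne := hi
        _ ≤ ξ := hξmem.1
    · obtain ⟨i, _, hi⟩ := Finset.mem_image.mp (tt.max'_mem htne)
      calc ξ ≤ tt.max' htne := hξmem.2
        _ = c i := hi.symm
        _ ≤ x i.succ := le_of_lt (hc1 i).2
        _ ≤ s.max' hs := s.le_max' _ (hxmem i.succ)

lemma poly_iter_deriv (p : Polynomial ℝ) :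
    ∀ k, deriv^[k] (fun x => p.eval x) = fun x => (Polynomial.derivative^[k] p).eval x := by
  intro k
  induction k generalizing p with
  | zero => simp
  | succ k ih =>
    rw [Function.iterate_succ_apply, Function.iterate_succ_apply]
    rw [show deriv (fun x => p.eval x) = fun x => (Polynomial.derivative p).eval x from
      funext fun x => Polynomial.deriv p]
    exact ih (Polynomial.derivative p)

lemma iterate_derivative_eq_C {p : Polynomial ℝ} {m : ℕ} (hp : p.natDegree ≤ m) :
    Polynomial.derivative^[m] p = Polynomial.C ((Nat.factorial m : ℝ) * p.coeff m) := by
  have h1 : (Polynomial.derivative^[m] p).natDegree = 0 := by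
    have := Polynomial.natDegree_iterate_derivative p m
    omega
  obtain ⟨c, hc⟩ := Polynomial.natDegree_eq_zero.mp h1
  have h2 : (Polynomial.derivative^[m] p).coeff 0 = (Nat.factorial m : ℝ) * p.coeff m := by
    rw [Polynomial.coeff_iterate_derivative, zero_add, Nat.descFactorial_self, nsmul_eq_mul]
  rw [← hc] at h2 ⊢
  rw [Polynomial.coeff_C_zero] at h2
  rw [h2]

lemma coeff_interpolate {m : ℕ} (v : Fin (m + 1) → ℝ) (hv : Function.Injective v) (r : Fin (m + 1) → ℝ) :
    (Lagrange.interpolate Finset.univ v r).coeff m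
      = ∑ i, r i * Lagrange.nodalWeight Finset.univ v i := by
  rw [Lagrange.interpolate_apply, Polynomial.finset_sum_coeff]
  refine Finset.sum_congr rfl fun i _ => ?_
  rw [Polynomial.coeff_C_mul]
  congr 1
  have hbasis : Lagrange.basis Finset.univ v i
      = Polynomial.C (Lagrange.nodalWeight Finset.univ v i)
        * Lagrange.nodal (Finset.univ.erase i) v := by
    simp_rw [Lagrange.basis, Lagrange.basisDivisor, Lagrange.nodalWeight,
      Finset.prod_mul_distrib, map_prod, Lagrange.nodal]
  rw [hbasis, Polynomial.coeff_C_mul]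
  have hdeg : (Lagrange.nodal (Finset.univ.erase i) v).natDegree = m := by
    rw [Lagrange.natDegree_nodal, Finset.card_erase_of_mem (Finset.mem_univ i),
      Finset.card_univ, Fintype.card_fin]
    omega
  have hc1 : (Lagrange.nodal (Finset.univ.erase i) v).coeff m = 1 := by
    have h2 := (Lagrange.nodal_monic (s := Finset.univ.erase i) (v := v)).coeff_natDegree
    rwa [hdeg] at h2
  rw [hc1, mul_one]

lemma iter_deriv_sub_poly (m : ℕ) (t : ℝ) (p : Polynomial ℝ) :
    ∀ k, k ≤ m → ∀ x ∈ Set.Ioi (0:ℝ),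
      deriv^[k] (fun y => y ^ m * Real.exp (-t / y) - p.eval y) x
        = deriv^[k] (fun y => y ^ m * Real.exp (-t / y)) x
          - (Polynomial.derivative^[k] p).eval x := by
  intro k
  induction k with
  | zero => intro _ x _; simp
  | succ k ih =>
    intro hk x hx
    have hx0 : (0:ℝ) < x := hx
    have hev : deriv^[k] (fun y => y ^ m * Real.exp (-t / y) - p.eval y) =ᶠ[𝓝 x]
        fun y => deriv^[k] (fun y => y ^ m * Real.exp (-t / y)) y
          - (Polynomial.derivative^[k] p).eval y :=
      Filter.eventuallyEq_of_mem (Ioi_mem_nhds hx0) (ih (le_of_lt hk))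
    rw [Function.iterate_succ_apply', hev.deriv_eq, deriv_fun_sub
        (differentiableAt_iter_deriv m t hk hx0) (Polynomial.differentiableAt _),
      Polynomial.deriv, ← Function.iterate_succ_apply' Polynomial.derivative k p,
      ← Function.iterate_succ_apply' deriv k (fun y => y ^ m * Real.exp (-t / y))]

lemma dd_mvt (m : ℕ) (t : ℝ) (v : Fin (m + 1) → ℝ) (hv : Function.Injective v)
    (hv0 : ∀ i, 0 < v i) :
    ∃ ξ, 0 < ξ ∧ (∃ i, v i ≤ ξ) ∧ (∃ j, ξ ≤ v j) ∧
      ∑ i, (v i ^ m * Real.exp (-t / v i)) * ∏ j ∈ Finset.univ.erase i, (v i - v j)⁻¹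
        = hypoF m t m ξ / Nat.factorial m := by
  classical
  set f := fun y : ℝ => y ^ m * Real.exp (-t / y) with hf
  set r : Fin (m + 1) → ℝ := fun i => f (v i) with hr
  set p := Lagrange.interpolate Finset.univ v r with hp
  set s := Finset.image v Finset.univ with hsdef
  have hs : s.Nonempty := Finset.Nonempty.image ⟨0, Finset.mem_univ 0⟩ v
  have hcard : s.card = m + 1 := by
    rw [hsdef, Finset.card_image_of_injective _ hv, Finset.card_univ, Fintype.card_fin]
  have hsub : ↑s ⊆ Set.Ioi (0:ℝ) := by
    intro y hy
    obtain ⟨i, _, rfl⟩ := Finset.mem_image.mp hy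
    exact hv0 i
  have hcont : ∀ j, j ≤ m → ContinuousOn (deriv^[j] (fun y => f y - p.eval y)) (Set.Ioi 0) := by
    intro j hj
    refine ContinuousOn.congr (((continuousOn_iter_deriv m t hj).sub
      ((Polynomial.derivative^[j] p).continuous_aeval.continuousOn))) ?_
    intro x hx
    exact iter_deriv_sub_poly m t p j hj x hx
  have hzero : ∀ x ∈ s, f x - p.eval x = 0 := by
    intro x hx
    obtain ⟨i, _, rfl⟩ := Finset.mem_image.mp hx
    rw [hp, Lagrange.eval_interpolate_at_node r hv.injOn (Finset.mem_univ i), sub_self]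
  obtain ⟨c, hcmem, hczero⟩ := iterated_rolle m _ s hs hcard hsub hcont hzero
  have hcpos : (0:ℝ) < c := lt_of_lt_of_le (hsub (s.min'_mem hs)) hcmem.1
  have heq := iter_deriv_sub_poly m t p m le_rfl c hcpos
  rw [hczero] at heq
  have hF : deriv^[m] (fun y => y ^ m * Real.exp (-t / y)) c = hypoF m t m c :=
    iter_deriv_eq_hypoF m t m le_rfl c hcpos
  have hdeg : p.natDegree ≤ m := by
    by_cases hp0 : p = 0
    · simp [hp0]
    · have h1 : p.degree < ((m + 1 : ℕ) : WithBot ℕ) := by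
        have := Lagrange.degree_interpolate_lt r hv.injOn (s := (Finset.univ : Finset (Fin (m+1))))
        rwa [Finset.card_univ, Fintype.card_fin] at this
      have := (Polynomial.natDegree_lt_iff_degree_lt hp0).mpr h1
      omega
  have hC : Polynomial.derivative^[m] p = Polynomial.C ((Nat.factorial m : ℝ) * p.coeff m) :=
    iterate_derivative_eq_C hdeg
  rw [hC, hF, Polynomial.eval_C] at heq
  have hcoeff : p.coeff m = ∑ i, r i * Lagrange.nodalWeight Finset.univ v i :=
    coeff_interpolate v hv r
  -- extract min'/max' bounds as existentials
  obtain ⟨i0, _, hi0⟩ := Finset.mem_image.mp (s.min'_mem hs)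
  obtain ⟨j0, _, hj0⟩ := Finset.mem_image.mp (s.max'_mem hs)
  refine ⟨c, hcpos, ⟨i0, hi0 ▸ hcmem.1⟩, ⟨j0, hj0 ▸ hcmem.2⟩, ?_⟩
  have hfac : (Nat.factorial m : ℝ) ≠ 0 := Nat.cast_ne_zero.mpr (Nat.factorial_ne_zero m)
  rw [eq_div_iff hfac]
  have : hypoF m t m c = (Nat.factorial m : ℝ) * p.coeff m := by linarith [heq]
  rw [hcoeff] at this
  rw [this, Finset.mul_sum, Finset.sum_mul]
  refine Finset.sum_congr rfl fun i _ => ?_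
  rw [hr, hf]
  simp only [Lagrange.nodalWeight]
  ring

lemma hypoF_at (m : ℕ) (t a : ℝ) (ha : a ≠ 0) :
    hypoF m t m a / Nat.factorial m
      = Real.exp (-t / a) * ∑ i ∈ Finset.range (m + 1), (t / a) ^ i / (Nat.factorial i) := by
  rw [hypoF, mul_div_assoc, Finset.sum_div]
  congr 1
  refine Finset.sum_congr rfl fun i hi => ?_
  have him : i ≤ m := Nat.lt_succ_iff.mp (Finset.mem_range.mp hi)
  have hz : a ^ ((m : ℤ) - m - i) = (a ^ i)⁻¹ := by
    rw [show (m : ℤ) - m - i = -(i : ℤ) by ring, zpow_neg, zpow_natCast]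
  rw [hz, hypoC, Nat.sub_self, Nat.factorial_zero, Nat.cast_one, div_one]
  have hkey : (m.choose i : ℝ) * (Nat.factorial i) * (Nat.factorial (m - i)) = Nat.factorial m := by
    exact_mod_cast congrArg (Nat.cast : ℕ → ℝ) (Nat.choose_mul_factorial_mul_factorial him)
  have hfi : (Nat.factorial i : ℝ) ≠ 0 := Nat.cast_ne_zero.mpr (Nat.factorial_ne_zero i)
  have hfm : (Nat.factorial m : ℝ) ≠ 0 := Nat.cast_ne_zero.mpr (Nat.factorial_ne_zero m)
  have hai : (a : ℝ) ^ i ≠ 0 := pow_ne_zero i ha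
  rw [div_pow]
  field_simp
  linear_combination (t ^ i) * hkey

lemma neg_one_pow_sq (m : ℕ) : (((-1:ℝ)) ^ m) ^ m = (-1:ℝ) ^ m := by
  rcases Nat.even_or_odd m with h | h
  · rw [h.neg_one_pow, one_pow]
  · rw [h.neg_one_pow]
    rcases h with ⟨w, hw⟩
    subst hw
    rw [pow_succ, pow_mul, neg_one_sq, one_pow, one_mul]

lemma prod_neg_eps (m : ℕ) (ε : Fin m → ℝ) :
    ∏ j, ((-1:ℝ) ^ m * ε j) = ∏ j, (-ε j) := by
  rw [Finset.prod_mul_distrib, Finset.prod_const, Finset.card_univ, Fintype.card_fin,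
    neg_one_pow_sq]
  have : ∏ j, (-ε j) = ∏ j, ((-1:ℝ) * ε j) := by
    refine Finset.prod_congr rfl fun j _ => by ring
  rw [this, Finset.prod_mul_distrib, Finset.prod_const, Finset.card_univ, Fintype.card_fin]

noncomputable def hypoV (m : ℕ) (a : ℝ) (ε : Fin m → ℝ) : Fin (m + 1) → ℝ :=
  Fin.cons a (fun j => a + ε j)

lemma dd_expand (m : ℕ) (a : ℝ) (ε : Fin m → ℝ) (f : ℝ → ℝ) :
    ∑ i : Fin (m + 1), f (hypoV m a ε i)
        * ∏ j ∈ Finset.univ.erase i, (hypoV m a ε i - hypoV m a ε j)⁻¹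
      = f a / ∏ j, ((-1:ℝ) ^ m * ε j)
        + ∑ i : Fin m, f (a + ε i) / (ε i * ∏ j ∈ Finset.univ.erase i, (ε i - ε j)) := by
  classical
  set v : Fin (m + 1) → ℝ := hypoV m a ε with hv
  have hv0 : v 0 = a := Fin.cons_zero _ _
  have hvs : ∀ j, v j.succ = a + ε j := fun j => Fin.cons_succ _ _ _
  rw [Fin.sum_univ_succ]
  congr 1
  · -- head term
    have hset : (Finset.univ : Finset (Fin (m + 1))).erase 0
        = Finset.univ.map (Fin.succEmb m) := by
      ext j
      cases j using Fin.cases with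
      | zero => simp [(Fin.succ_ne_zero _).symm]
      | succ j' => simp [Fin.succ_ne_zero, Fin.succEmb]
    rw [hset, Finset.prod_map]
    have hterm : ∀ j : Fin m, (v 0 - v ((Fin.succEmb m) j))⁻¹ = (-ε j)⁻¹ := by
      intro j
      have h2 : v ((Fin.succEmb m) j) = a + ε j := hvs j
      rw [hv0, h2]
      congr 1
      ring
    rw [Finset.prod_congr rfl fun j _ => hterm j, Finset.prod_inv_distrib, prod_neg_eps,
      hv0, div_eq_mul_inv]
  · -- tail terms
    refine Finset.sum_congr rfl fun i _ => ?_
    have hset : (Finset.univ : Finset (Fin (m + 1))).erase i.succ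
        = insert 0 ((Finset.univ.erase i).map (Fin.succEmb m)) := by
      ext j
      cases j using Fin.cases with
      | zero => simp [(Fin.succ_ne_zero _).symm]
      | succ j' => simp [Fin.succ_ne_zero, Fin.succEmb, Fin.succ_inj]
    have h0notin : (0 : Fin (m + 1)) ∉ (Finset.univ.erase i).map (Fin.succEmb m) := by
      simp [Fin.succ_ne_zero, Fin.succEmb]
    rw [hset, Finset.prod_insert h0notin, Finset.prod_map]
    have h1 : v i.succ = a + ε i := hvs i
    have hterm : ∀ j ∈ Finset.univ.erase i,
        (v i.succ - v ((Fin.succEmb m) j))⁻¹ = (ε i - ε j)⁻¹ := by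
      intro j _
      have h3 : v ((Fin.succEmb m) j) = a + ε j := hvs j
      rw [h1, h3]
      congr 1
      ring
    rw [Finset.prod_congr rfl hterm, Finset.prod_inv_distrib, h1, hv0,
      show a + ε i - a = ε i by ring, div_eq_mul_inv, mul_inv]

theorem hypoexp_degenerate_limit (n : ℕ) (hn : 1 ≤ n) (a t : ℝ) (ha : 0 < a) (ht : 0 ≤ t) :
    Tendsto (fun ε : Fin (n - 1) → ℝ =>
        (a ^ (n - 1) * Real.exp (-t / a)) / ∏ j, ((-1 : ℝ) ^ (n - 1) * ε j)
          + ∑ i, ((a + ε i) ^ (n - 1) * Real.exp (-t / (a + ε i))) /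
              (ε i * ∏ j ∈ Finset.univ.erase i, (ε i - ε j)))
      (𝓝[{ε : Fin (n - 1) → ℝ | (∀ i, ε i ≠ 0) ∧ Function.Injective ε ∧ ∀ i, 0 < a + ε i}] 0)
      (𝓝 (Real.exp (-t / a) * ∑ i ∈ Finset.range n, (t / a) ^ i / (Nat.factorial i))) := by
  obtain ⟨m, rfl⟩ : ∃ m, n = m + 1 := ⟨n - 1, by omega⟩
  show Tendsto (fun ε : Fin m → ℝ =>
        (a ^ m * Real.exp (-t / a)) / ∏ j, ((-1 : ℝ) ^ m * ε j)
          + ∑ i, ((a + ε i) ^ m * Real.exp (-t / (a + ε i))) /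
              (ε i * ∏ j ∈ Finset.univ.erase i, (ε i - ε j)))
      (𝓝[{ε : Fin m → ℝ | (∀ i, ε i ≠ 0) ∧ Function.Injective ε ∧ ∀ i, 0 < a + ε i}] 0)
      (𝓝 (Real.exp (-t / a) * ∑ i ∈ Finset.range (m + 1), (t / a) ^ i / (Nat.factorial i)))
  have hL : Real.exp (-t / a) * ∑ i ∈ Finset.range (m + 1), (t / a) ^ i / (Nat.factorial i)
      = hypoF m t m a / Nat.factorial m := (hypoF_at m t a ha.ne').symm
  rw [hL, Metric.tendsto_nhdsWithin_nhds]
  intro η hη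
  have hcontF : ContinuousAt (fun x => hypoF m t m x / (Nat.factorial m : ℝ)) a :=
    (((continuousOn_hypoF m t m).continuousAt (Ioi_mem_nhds ha)).div_const _)
  obtain ⟨δ, hδ, hball⟩ := Metric.continuousAt_iff.mp hcontF η hη
  refine ⟨δ, hδ, ?_⟩
  intro ε hεS hεdist
  obtain ⟨hne, hinj, hpos⟩ := hεS
  set v : Fin (m + 1) → ℝ := hypoV m a ε with hvdef
  have hv0 : v 0 = a := Fin.cons_zero _ _
  have hvs : ∀ j, v j.succ = a + ε j := fun j => Fin.cons_succ _ _ _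
  have hvinj : Function.Injective v := by
    intro i j hij
    induction i using Fin.cases with
    | zero =>
      induction j using Fin.cases with
      | zero => rfl
      | succ j' =>
        rw [hv0, hvs j'] at hij
        exact absurd (by linarith : ε j' = 0) (hne j')
    | succ i' =>
      induction j using Fin.cases with
      | zero =>
        rw [hv0, hvs i'] at hij
        exact absurd (by linarith : ε i' = 0) (hne i')
      | succ j' =>
        rw [hvs i', hvs j'] at hij
        have : ε i' = ε j' := by linarith
        rw [hinj this]
  have hvpos : ∀ i, 0 < v i := by
    intro i
    induction i using Fin.cases with
    | zero => rw [hv0]; exact ha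
    | succ i' => rw [hvs i']; exact hpos i'
  obtain ⟨ξ, hξpos, ⟨i0, hi0⟩, ⟨j0, hj0⟩, hsum⟩ := dd_mvt m t v hvinj hvpos
  have hεnorm : ∀ k, |ε k| ≤ dist ε 0 := by
    intro k
    rw [dist_zero_right]
    exact norm_le_pi_norm ε k
  have hlow : ∀ i, a - dist ε 0 ≤ v i := by
    intro i
    induction i using Fin.cases with
    | zero => rw [hv0]; linarith [dist_nonneg (x := ε) (y := 0)]
    | succ i' =>
      rw [hvs i']
      have := abs_le.mp (le_trans (le_refl _) (hεnorm i'))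
      linarith [this.1]
  have hhigh : ∀ i, v i ≤ a + dist ε 0 := by
    intro i
    induction i using Fin.cases with
    | zero => rw [hv0]; linarith [dist_nonneg (x := ε) (y := 0)]
    | succ i' =>
      rw [hvs i']
      have := abs_le.mp (hεnorm i')
      linarith [this.2]
  have hξdist : dist ξ a < δ := by
    rw [Real.dist_eq, abs_sub_lt_iff]
    constructor
    · have : ξ ≤ a + dist ε 0 := le_trans hj0 (hhigh j0)
      linarith
    · have : a - dist ε 0 ≤ ξ := le_trans (hlow i0) hi0
      linarith
  have hdd := dd_expand m a ε (fun x => x ^ m * Real.exp (-t / x))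
  have hval : (a ^ m * Real.exp (-t / a)) / ∏ j, ((-1 : ℝ) ^ m * ε j)
      + ∑ i, ((a + ε i) ^ m * Real.exp (-t / (a + ε i))) /
          (ε i * ∏ j ∈ Finset.univ.erase i, (ε i - ε j))
      = hypoF m t m ξ / Nat.factorial m := by
    rw [← hdd]
    exact hsum
  rw [hval]
  exact hball hξdist
end

section
/- Let λ_1 > 0 and t ≥ 0. The limit as (ε_2, ε_3) → (0,0) through pairs with ε_2, ε_3, ε_2 - ε_3 all nonzero of the expression λ_1² e^{-t/λ_1}/(ε_2 ε_3) + (λ_1+ε_2)² e^{-t/(λ_1+ε_2)}/(ε_2(ε_2-ε_3)) + (λ_1+ε_3)² e^{-t/(λ_1+ε_3)}/(ε_3(ε_3-ε_2)) equals e^{-t/λ_1}(1 + t/λ_1 + (t/λ_1)²/2). -/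
open Filter Topology Set


/-- Mean value theorem for second divided differences (sorted points). -/
lemma divdiff_mvt (f f1 f2 : ℝ → ℝ) (a b c : ℝ) (hab : a < b) (hbc : b < c)
    (hf : ∀ x ∈ Set.Icc a c, HasDerivAt f (f1 x) x)
    (hf1 : ∀ x ∈ Set.Icc a c, HasDerivAt f1 (f2 x) x) :
    ∃ ξ ∈ Set.Ioo a c,
      f a / ((a - b) * (a - c)) + f b / ((b - a) * (b - c)) + f c / ((c - a) * (c - b))
        = f2 ξ / 2 := by
  have hac : a < c := hab.trans hbc
  have hab' : b - a ≠ 0 := sub_ne_zero.mpr hab.ne'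
  have hac' : c - a ≠ 0 := sub_ne_zero.mpr hac.ne'
  have hbc' : c - b ≠ 0 := sub_ne_zero.mpr hbc.ne'
  have hab'' : a - b ≠ 0 := sub_ne_zero.mpr hab.ne
  have hac'' : a - c ≠ 0 := sub_ne_zero.mpr hac.ne
  have hbc'' : b - c ≠ 0 := sub_ne_zero.mpr hbc.ne
  set E : ℝ := f a / ((a - b) * (a - c)) + f b / ((b - a) * (b - c))
      + f c / ((c - a) * (c - b)) with hE
  set S : ℝ := (f b - f a) / (b - a) with hS
  set g : ℝ → ℝ := fun x => f x - f a - S * (x - a) - E * ((x - a) * (x - b)) with hg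
  set g1 : ℝ → ℝ := fun x => f1 x - S - E * (2 * x - a - b) with hg1
  have hg' : ∀ x ∈ Set.Icc a c, HasDerivAt g (g1 x) x := by
    intro x hx
    have h1 : HasDerivAt (fun x : ℝ => (x - a) * (x - b)) (2 * x - a - b) x := by
      have := ((hasDerivAt_id x).sub_const a).mul ((hasDerivAt_id x).sub_const b)
      refine this.congr_deriv ?_
      simp only [id_eq]; ring
    have := (((hf x hx).sub_const (f a)).sub
        (((hasDerivAt_id x).sub_const a).const_mul S)).sub (h1.const_mul E)
    refine this.congr_deriv ?_
    simp only [hg1]; ring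
  have hgc : ∀ x ∈ Set.Icc a c, ContinuousAt g x := fun x hx => (hg' x hx).continuousAt
  have hga : g a = 0 := by simp [hg]
  have hgb : g b = 0 := by
    simp only [hg, hS]
    field_simp
    ring
  have hgc0 : g c = 0 := by
    simp only [hg, hS, hE]
    field_simp
    ring
  obtain ⟨ξ₁, hξ₁, hv1⟩ := exists_hasDerivAt_eq_zero hab
    (fun x hx => (hgc x (Icc_subset_Icc le_rfl hbc.le hx)).continuousWithinAt)
    (hga.trans hgb.symm)
    (fun x hx => hg' x ⟨hx.1.le, hx.2.le.trans hbc.le⟩)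
  obtain ⟨ξ₂, hξ₂, hv2⟩ := exists_hasDerivAt_eq_zero hbc
    (fun x hx => (hgc x (Icc_subset_Icc hab.le le_rfl hx)).continuousWithinAt)
    (hgb.trans hgc0.symm)
    (fun x hx => hg' x ⟨hab.le.trans hx.1.le, hx.2.le⟩)
  have hξ12 : ξ₁ < ξ₂ := hξ₁.2.trans hξ₂.1
  have hsub : Set.Icc ξ₁ ξ₂ ⊆ Set.Icc a c :=
    Icc_subset_Icc hξ₁.1.le (hξ₂.2.le)
  have hg1' : ∀ x ∈ Set.Icc ξ₁ ξ₂, HasDerivAt g1 (f2 x - 2 * E) x := by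
    intro x hx
    have h2 : HasDerivAt (fun x : ℝ => 2 * x - a - b) 2 x := by
      have := (((hasDerivAt_id x).const_mul 2).sub_const a).sub_const b
      simpa using this
    have := ((((hf1 x (hsub hx)).sub_const S)).sub (h2.const_mul E))
    refine this.congr_deriv ?_
    ring
  obtain ⟨ξ, hξ, hv⟩ := exists_hasDerivAt_eq_zero hξ12
    (fun x hx => (hg1' x hx).continuousAt.continuousWithinAt)
    (hv1.trans hv2.symm)
    (fun x hx => hg1' x ⟨hx.1.le, hx.2.le⟩)
  refine ⟨ξ, ⟨hξ₁.1.trans hξ.1, hξ.2.trans hξ₂.2⟩, ?_⟩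
  have : f2 ξ = 2 * E := by linarith [hv]
  rw [this]; ring

/-- Unsorted version. -/
lemma divdiff_mvt' (f f1 f2 : ℝ → ℝ) (r : ℝ)
    (hf : ∀ x ∈ Set.Icc (-r) r, HasDerivAt f (f1 x) x)
    (hf1 : ∀ x ∈ Set.Icc (-r) r, HasDerivAt f1 (f2 x) x)
    (a b c : ℝ) (ha : a ∈ Set.Ioo (-r) r) (hb : b ∈ Set.Ioo (-r) r) (hc : c ∈ Set.Ioo (-r) r)
    (hab : a ≠ b) (hac : a ≠ c) (hbc : b ≠ c) :
    ∃ ξ ∈ Set.Ioo (-r) r,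
      f a / ((a - b) * (a - c)) + f b / ((b - a) * (b - c)) + f c / ((c - a) * (c - b))
        = f2 ξ / 2 := by
  -- sort the points
  have main : ∀ x y z : ℝ, x ∈ Set.Ioo (-r) r → z ∈ Set.Ioo (-r) r → x < y → y < z →
      ∃ ξ ∈ Set.Ioo (-r) r,
        f x / ((x - y) * (x - z)) + f y / ((y - x) * (y - z)) + f z / ((z - x) * (z - y))
          = f2 ξ / 2 := by
    intro x y z hx hz hxy hyz
    obtain ⟨ξ, hξ, hv⟩ := divdiff_mvt f f1 f2 x y z hxy hyz
      (fun u hu => hf u (Icc_subset_Icc hx.1.le hz.2.le hu))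
      (fun u hu => hf1 u (Icc_subset_Icc hx.1.le hz.2.le hu))
    exact ⟨ξ, ⟨hx.1.trans hξ.1, hξ.2.trans hz.2⟩, hv⟩
  rcases lt_trichotomy a b with h1 | h1 | h1
  · rcases lt_trichotomy b c with h2 | h2 | h2
    · exact main a b c ha hc h1 h2
    · exact absurd h2 hbc
    · rcases lt_trichotomy a c with h3 | h3 | h3
      · obtain ⟨ξ, hξ, hv⟩ := main a c b ha hb h3 h2
        exact ⟨ξ, hξ, by rw [← hv]; ring⟩
      · exact absurd h3 hac
      · obtain ⟨ξ, hξ, hv⟩ := main c a b hc hb h3 h1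
        exact ⟨ξ, hξ, by rw [← hv]; ring⟩
  · exact absurd h1 hab
  · rcases lt_trichotomy a c with h2 | h2 | h2
    · obtain ⟨ξ, hξ, hv⟩ := main b a c hb hc h1 h2
      exact ⟨ξ, hξ, by rw [← hv]; ring⟩
    · exact absurd h2 hac
    · rcases lt_trichotomy b c with h3 | h3 | h3
      · obtain ⟨ξ, hξ, hv⟩ := main b c a hb ha h3 h2
        exact ⟨ξ, hξ, by rw [← hv]; ring⟩
      · exact absurd h3 hbc
      · obtain ⟨ξ, hξ, hv⟩ := main c b a hc ha h3 h1
        exact ⟨ξ, hξ, by rw [← hv]; ring⟩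

theorem hypoexp_three_limit (lam₁ : ℝ) (hlam₁ : 0 < lam₁) (t : ℝ) (ht : 0 ≤ t) :
    Tendsto (fun e : ℝ × ℝ =>
        lam₁ ^ 2 * Real.exp (-t / lam₁) / (e.1 * e.2)
          + (lam₁ + e.1) ^ 2 * Real.exp (-t / (lam₁ + e.1)) / (e.1 * (e.1 - e.2))
          + (lam₁ + e.2) ^ 2 * Real.exp (-t / (lam₁ + e.2)) / (e.2 * (e.2 - e.1)))
      (𝓝[{e : ℝ × ℝ | e.1 ≠ 0 ∧ e.2 ≠ 0 ∧ e.1 ≠ e.2}] (0, 0))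
      (𝓝 (Real.exp (-t / lam₁) * (1 + t / lam₁ + (t / lam₁) ^ 2 / 2))) := by
  set f : ℝ → ℝ := fun x => (lam₁ + x) ^ 2 * Real.exp (-t / (lam₁ + x)) with hf
  set f1 : ℝ → ℝ := fun x => Real.exp (-t / (lam₁ + x)) * (2 * (lam₁ + x) + t) with hf1
  set f2 : ℝ → ℝ := fun x =>
    Real.exp (-t / (lam₁ + x)) * (2 + 2 * t / (lam₁ + x) + (t / (lam₁ + x)) ^ 2) with hf2
  -- derivative computations on any point with lam₁ + x > 0
  have hderiv1 : ∀ x : ℝ, 0 < lam₁ + x → HasDerivAt f (f1 x) x := by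
    intro x hx
    have hPne : lam₁ + x ≠ 0 := hx.ne'
    have hL : HasDerivAt (fun x : ℝ => lam₁ + x) 1 x := (hasDerivAt_id x).const_add lam₁
    have hu : HasDerivAt (fun x : ℝ => -t / (lam₁ + x)) (t / (lam₁ + x) ^ 2) x := by
      have heq : (fun x : ℝ => -t / (lam₁ + x)) = fun x : ℝ => -t * (lam₁ + x)⁻¹ := by
        funext y; ring
      rw [heq]
      have := (hL.inv hPne).const_mul (-t)
      refine this.congr_deriv ?_
      field_simp
    have hexp : HasDerivAt (fun x : ℝ => Real.exp (-t / (lam₁ + x)))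
        (Real.exp (-t / (lam₁ + x)) * (t / (lam₁ + x) ^ 2)) x := hu.exp
    have hpow : HasDerivAt (fun x : ℝ => (lam₁ + x) ^ 2) (2 * (lam₁ + x)) x := by
      have := hL.pow 2
      refine this.congr_deriv ?_
      simp
    have := hpow.mul hexp
    refine this.congr_deriv ?_
    simp only [hf1]
    field_simp
  have hderiv2 : ∀ x : ℝ, 0 < lam₁ + x → HasDerivAt f1 (f2 x) x := by
    intro x hx
    have hPne : lam₁ + x ≠ 0 := hx.ne'
    have hL : HasDerivAt (fun x : ℝ => lam₁ + x) 1 x := (hasDerivAt_id x).const_add lam₁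
    have hu : HasDerivAt (fun x : ℝ => -t / (lam₁ + x)) (t / (lam₁ + x) ^ 2) x := by
      have heq : (fun x : ℝ => -t / (lam₁ + x)) = fun x : ℝ => -t * (lam₁ + x)⁻¹ := by
        funext y; ring
      rw [heq]
      have := (hL.inv hPne).const_mul (-t)
      refine this.congr_deriv ?_
      field_simp
    have hexp : HasDerivAt (fun x : ℝ => Real.exp (-t / (lam₁ + x)))
        (Real.exp (-t / (lam₁ + x)) * (t / (lam₁ + x) ^ 2)) x := hu.exp
    have hlin : HasDerivAt (fun x : ℝ => 2 * (lam₁ + x) + t) 2 x := by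
      have := (hL.const_mul 2).add_const t
      simpa using this
    have := hexp.mul hlin
    refine this.congr_deriv ?_
    simp only [hf2]
    field_simp
    ring
  -- continuity of f2 at 0
  have hPne0 : lam₁ + (0 : ℝ) ≠ 0 := by simpa using hlam₁.ne'
  have hcont : ContinuousAt f2 0 := by
    have h1 : ContinuousAt (fun x : ℝ => lam₁ + x) 0 := by fun_prop
    have h2 : ContinuousAt (fun x : ℝ => t / (lam₁ + x)) 0 :=
      (continuousAt_const.div h1 hPne0)
    have h3 : ContinuousAt (fun x : ℝ => -t / (lam₁ + x)) 0 :=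
      (continuousAt_const.div h1 hPne0)
    have h4 : ContinuousAt (fun x : ℝ => 2 * t / (lam₁ + x)) 0 :=
      (continuousAt_const.div h1 hPne0)
    exact (Real.continuous_exp.continuousAt.comp h3).mul
      ((continuousAt_const.add h4).add (h2.pow 2))
  have hf20 : f2 0 = 2 * (Real.exp (-t / lam₁) * (1 + t / lam₁ + (t / lam₁) ^ 2 / 2)) := by
    simp only [hf2, add_zero]
    ring
  rw [Metric.tendsto_nhdsWithin_nhds]
  intro ε hε
  obtain ⟨η, hη, hηc⟩ := Metric.continuousAt_iff.mp hcont ε hε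
  set δ : ℝ := min η (lam₁ / 2) with hδdef
  have hδ : 0 < δ := lt_min hη (by linarith)
  refine ⟨δ, hδ, ?_⟩
  rintro ⟨e1, e2⟩ ⟨he1, he2, he12⟩ hdist
  simp only at he1 he2 he12
  have hd1 : |e1| < δ := by
    have := (le_max_left (dist e1 (0:ℝ)) (dist e2 (0:ℝ))).trans_lt (by rwa [Prod.dist_eq] at hdist)
    simpa [Real.dist_eq] using this
  have hd2 : |e2| < δ := by
    have := (le_max_right (dist e1 (0:ℝ)) (dist e2 (0:ℝ))).trans_lt (by rwa [Prod.dist_eq] at hdist)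
    simpa [Real.dist_eq] using this
  -- derivative hypotheses on Icc (-δ) δ
  have hpos : ∀ x ∈ Set.Icc (-δ) δ, 0 < lam₁ + x := by
    intro x hx
    have : δ ≤ lam₁ / 2 := min_le_right _ _
    have := hx.1
    linarith
  have h0mem : (0 : ℝ) ∈ Set.Ioo (-δ) δ := ⟨by linarith, hδ⟩
  have h1mem : e1 ∈ Set.Ioo (-δ) δ := abs_lt.mp hd1
  have h2mem : e2 ∈ Set.Ioo (-δ) δ := abs_lt.mp hd2
  obtain ⟨ξ, hξ, hval⟩ := divdiff_mvt' f f1 f2 δ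
    (fun x hx => hderiv1 x (hpos x hx)) (fun x hx => hderiv2 x (hpos x hx))
    0 e1 e2 h0mem h1mem h2mem (Ne.symm he1) (Ne.symm he2) he12
  have hexpr : lam₁ ^ 2 * Real.exp (-t / lam₁) / (e1 * e2)
      + (lam₁ + e1) ^ 2 * Real.exp (-t / (lam₁ + e1)) / (e1 * (e1 - e2))
      + (lam₁ + e2) ^ 2 * Real.exp (-t / (lam₁ + e2)) / (e2 * (e2 - e1))
      = f 0 / ((0 - e1) * (0 - e2)) + f e1 / ((e1 - 0) * (e1 - e2))
        + f e2 / ((e2 - 0) * (e2 - e1)) := by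
    simp only [hf, add_zero, zero_sub, sub_zero, neg_mul_neg]
  have hξd : dist ξ 0 < η := by
    rw [Real.dist_eq, sub_zero]
    exact lt_of_lt_of_le (abs_lt.mpr hξ) (min_le_left _ _)
  have hfar := hηc hξd
  rw [Real.dist_eq, hf20] at hfar
  show dist (lam₁ ^ 2 * Real.exp (-t / lam₁) / (e1 * e2)
      + (lam₁ + e1) ^ 2 * Real.exp (-t / (lam₁ + e1)) / (e1 * (e1 - e2))
      + (lam₁ + e2) ^ 2 * Real.exp (-t / (lam₁ + e2)) / (e2 * (e2 - e1)))
      (Real.exp (-t / lam₁) * (1 + t / lam₁ + (t / lam₁) ^ 2 / 2)) < ε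
  rw [Real.dist_eq, hexpr, hval]
  have key : |f2 ξ / 2 - Real.exp (-t / lam₁) * (1 + t / lam₁ + (t / lam₁) ^ 2 / 2)|
      = |f2 ξ - 2 * (Real.exp (-t / lam₁) * (1 + t / lam₁ + (t / lam₁) ^ 2 / 2))| / 2 := by
    rw [show f2 ξ / 2 - Real.exp (-t / lam₁) * (1 + t / lam₁ + (t / lam₁) ^ 2 / 2)
        = (f2 ξ - 2 * (Real.exp (-t / lam₁) * (1 + t / lam₁ + (t / lam₁) ^ 2 / 2))) / 2 by ring,
      abs_div, abs_two]
  rw [key]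
  have hnn := abs_nonneg (f2 ξ - 2 * (Real.exp (-t / lam₁) * (1 + t / lam₁ + (t / lam₁) ^ 2 / 2)))
  linarith
end
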